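/- Every graph automorphism of Γ₇ maps the edge set of the hexagonal cycle K = a₁a₂a₃b₁b₂b₃a₁ (namely {a₁a₂, a₂a₃, a₃b₁, b₁b₂, b₂b₃, b₃a₁}) onto itself. -/

import Mathlib

/-- The vertices of the graph `Γ₇`. -/
inductive V7 : Type
  | v | a1 | a2 | a3 | b1 | b2 | b3
  deriving DecidableEq

open V7

/-- The graph `Γ₇`: the hexagonal cycle `a₁a₂a₃b₁b₂b₃a₁`, the chords `a₂b₂` and `a₃b₃`,
and the four edges `va₁`, `vb₁`, `va₂`, `vb₂`. -/
def Gamma7 : SimpleGraph V7 :=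
  SimpleGraph.fromEdgeSet
    {s(a1, a2), s(a2, a3), s(a3, b1), s(b1, b2), s(b2, b3), s(b3, a1),
     s(a2, b2), s(a3, b3),
     s(v, a1), s(v, b1), s(v, a2), s(v, b2)}

/-- The edge set of the hexagonal cycle `K = a₁a₂a₃b₁b₂b₃a₁` in `Γ₇`. -/
def hexEdges7 : Set (Sym2 V7) :=
  {s(a1, a2), s(a2, a3), s(a3, b1), s(b1, b2), s(b2, b3), s(b3, a1)}

instance : Fintype V7 := ⟨{v, a1, a2, a3, b1, b2, b3}, by intro x; cases x <;> simp⟩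

def edgeList : List (Sym2 V7) :=
  [s(a1,a2), s(a2,a3), s(a3,b1), s(b1,b2), s(b2,b3), s(b3,a1),
   s(a2,b2), s(a3,b3), s(v,a1), s(v,b1), s(v,a2), s(v,b2)]

instance : DecidableRel Gamma7.Adj := fun u w =>
  decidable_of_iff (s(u,w) ∈ edgeList ∧ u ≠ w) (by
    rw [Gamma7, SimpleGraph.fromEdgeSet_adj]
    simp [edgeList, Set.mem_insert_iff, List.mem_cons, or_assoc])

def edgePairs : List (V7 × V7) :=
  [(a1,a2),(a2,a3),(a3,b1),(b1,b2),(b2,b3),(b3,a1),(a2,b2),(a3,b3),(v,a1),(v,b1),(v,a2),(v,b2)]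

def hexPairs : List (V7 × V7) :=
  [(a1,a2),(a2,a3),(a3,b1),(b1,b2),(b2,b3),(b3,a1)]

def adjB (u w : V7) : Bool := (u,w) ∈ edgePairs || (w,u) ∈ edgePairs
def hexB (u w : V7) : Bool := (u,w) ∈ hexPairs || (w,u) ∈ hexPairs

lemma adj_iff : ∀ u w, Gamma7.Adj u w ↔ adjB u w = true := by decide

lemma hex_iff : ∀ u w, s(u, w) ∈ hexEdges7 ↔ hexB u w = true := by
  intro u w
  cases u <;> cases w <;>
    simp [hexEdges7, hexB, hexPairs, Sym2.eq, Sym2.rel_iff'] <;> decide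

def verts : List V7 := [v, a1, a2, a3, b1, b2, b3]

/-- `y` is a consistent image for `x` given partial assignment `sofar`. -/
def ok (sofar : List (V7 × V7)) (x y : V7) : Bool :=
  sofar.all fun p => (p.2 != y) && (adjB x p.1 == adjB y p.2)

/-- Final check on a complete assignment: hex edges map to hex edges. -/
def hexcheck (sofar : List (V7 × V7)) : Bool :=
  sofar.all fun p => sofar.all fun q => !(hexB p.1 q.1) || hexB p.2 q.2

/-- Pruned DFS over all injective, adjacency-preserving assignments. -/
def search : List V7 → List (V7 × V7) → Bool
  | [], sofar => hexcheck sofar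
  | x :: rest, sofar =>
      verts.all fun y => !(ok sofar x y) || search rest ((x, y) :: sofar)

set_option maxRecDepth 100000 in
lemma key : search verts [] = true := by decide

/-- Every graph automorphism of `Γ₇` maps the edge set of the hexagonal cycle
`K = a₁a₂a₃b₁b₂b₃a₁` onto itself: `{φ(u), φ(w)} ∈ K` for every edge `{u, w}` of `K`. -/
theorem automorphism_of_Gamma7_preserves_hexagon (φ : Gamma7 ≃g Gamma7) :
    ∀ u w : V7, s(u, w) ∈ hexEdges7 → s(φ u, φ w) ∈ hexEdges7 := by
  have hadj : ∀ a b : V7, adjB (φ a) (φ b) = adjB a b := fun a b =>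
    Bool.eq_iff_iff.mpr (((adj_iff _ _).symm.trans φ.map_adj_iff).trans (adj_iff _ _))
  have hmem : ∀ y : V7, y ∈ verts := by decide
  -- one descent step of the search along the branch given by φ
  have step : ∀ (x : V7) (todo : List V7) (sofar : List (V7 × V7)),
      search (x :: todo) sofar = true →
      (∀ p ∈ sofar, p.2 = φ p.1 ∧ p.1 ≠ x) →
      search todo ((x, φ x) :: sofar) = true := by
    intro x todo sofar h hs
    have hok : ok sofar x (φ x) = true := by
      refine List.all_eq_true.mpr fun p hp => ?_
      obtain ⟨h2, h1⟩ := hs p hp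
      have hne : φ p.1 ≠ φ x := fun hc => h1 (φ.injective hc)
      rw [h2]
      simp [bne, hne, hadj]
    have := List.all_eq_true.mp h (φ x) (hmem (φ x))
    simpa [hok] using this
  have s1 := step v _ [] key (by simp)
  have s2 := step a1 _ _ s1 (by intro p hp; fin_cases hp <;> exact ⟨rfl, by simp⟩)
  have s3 := step a2 _ _ s2 (by intro p hp; fin_cases hp <;> exact ⟨rfl, by simp⟩)
  have s4 := step a3 _ _ s3 (by intro p hp; fin_cases hp <;> exact ⟨rfl, by simp⟩)
  have s5 := step b1 _ _ s4 (by intro p hp; fin_cases hp <;> exact ⟨rfl, by simp⟩)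
  have s6 := step b2 _ _ s5 (by intro p hp; fin_cases hp <;> exact ⟨rfl, by simp⟩)
  have s7 := step b3 _ _ s6 (by intro p hp; fin_cases hp <;> exact ⟨rfl, by simp⟩)
  have hfin : hexcheck [(b3, φ b3), (b2, φ b2), (b1, φ b1), (a3, φ a3), (a2, φ a2),
      (a1, φ a1), (v, φ v)] = true := s7
  have hall := List.all_eq_true.mp hfin
  intro u w h
  rw [hex_iff] at h ⊢
  have get : ∀ p ∈ [(b3, φ b3), (b2, φ b2), (b1, φ b1), (a3, φ a3), (a2, φ a2),
      (a1, φ a1), (v, φ v)], ∀ q ∈ [(b3, φ b3), (b2, φ b2), (b1, φ b1), (a3, φ a3),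
      (a2, φ a2), (a1, φ a1), (v, φ v)], hexB p.1 q.1 = true → hexB p.2 q.2 = true := by
    intro p hp q hq hpq
    have := List.all_eq_true.mp (hall p hp) q hq
    simpa [hpq] using this
  have hu : (u, φ u) ∈ [(b3, φ b3), (b2, φ b2), (b1, φ b1), (a3, φ a3), (a2, φ a2),
      (a1, φ a1), (v, φ v)] := by cases u <;> simp
  have hw : (w, φ w) ∈ [(b3, φ b3), (b2, φ b2), (b1, φ b1), (a3, φ a3), (a2, φ a2),
      (a1, φ a1), (v, φ v)] := by cases w <;> simp
  exact get _ hu _ hw h
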